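/- The extreme points of the convex-form space of the hexagon are exactly the zero form, the unit form, and the six forms v i: Set.extremePoints ℝ OC = {0, 1, v 0, v 1, v 2, v 3, v 4, v 5}, where 0 and 1 denote the constant affine maps with values 0 and 1. -/

import Mathlib

noncomputable section

/-- The vertices of a regular hexagon in `ℝ²`. -/
def s (j : Fin 6) : ℝ × ℝ :=
  (Real.cos (((j : ℕ) + 1 : ℝ) * Real.pi / 3), Real.sin (((j : ℕ) + 1 : ℝ) * Real.pi / 3))

/-- The hexagon. -/
def C : Set (ℝ × ℝ) := convexHull ℝ {s 0, s 1, s 2, s 3, s 4, s 5}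

/-- The prescribed vertex values of the hexagon's extreme convex forms:
`v i (s j) = 1` if `j ∈ {i, i+1}`, `v i (s j) = 1/2` if `j ∈ {i-1, i+2}`, and
`v i (s j) = 0` if `j ∈ {i+3, i+4}` (indices cyclic in `Fin 6`). -/
def IsHexForms (v : Fin 6 → ((ℝ × ℝ) →ᵃ[ℝ] ℝ)) : Prop :=
  ∀ i : Fin 6,
    v i (s i) = 1 ∧ v i (s (i + 1)) = 1 ∧
    v i (s (i - 1)) = 1 / 2 ∧ v i (s (i + 2)) = 1 / 2 ∧
    v i (s (i + 3)) = 0 ∧ v i (s (i + 4)) = 0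

/-- The convex-form space of the hexagon. -/
def OC : Set ((ℝ × ℝ) →ᵃ[ℝ] ℝ) := {f | ∀ x ∈ C, f x ∈ Set.Icc 0 1}

namespace HexAux

local notation "rr" => (Real.sqrt 3 / 2 : ℝ)

lemma hrrpos : (0:ℝ) < rr := by positivity
lemma hrrne : (rr:ℝ) ≠ 0 := ne_of_gt hrrpos

lemma s0 : s 0 = (1/2, rr) := by
  unfold s; norm_num [Real.cos_pi_div_three, Real.sin_pi_div_three]

lemma s1 : s 1 = (-(1/2), rr) := by
  unfold s
  have h1 : (((1:Fin 6) : ℕ) + 1 : ℝ) * Real.pi / 3 = Real.pi - Real.pi/3 := by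
    have hc : ((1:Fin 6):ℕ) = 1 := rfl
    rw [hc]; push_cast; ring
  rw [h1, Real.cos_pi_sub, Real.sin_pi_sub, Real.cos_pi_div_three, Real.sin_pi_div_three]

lemma s2 : s 2 = (-1, 0) := by
  unfold s
  have h1 : (((2:Fin 6) : ℕ) + 1 : ℝ) * Real.pi / 3 = Real.pi := by
    have hc : ((2:Fin 6):ℕ) = 2 := rfl
    rw [hc]; push_cast; ring
  rw [h1, Real.cos_pi, Real.sin_pi]

lemma s3 : s 3 = (-(1/2), -rr) := by
  unfold s
  have h1 : (((3:Fin 6) : ℕ) + 1 : ℝ) * Real.pi / 3 = Real.pi + Real.pi/3 := by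
    have hc : ((3:Fin 6):ℕ) = 3 := rfl
    rw [hc]; push_cast; ring
  rw [h1, Real.cos_add, Real.sin_add, Real.cos_pi, Real.sin_pi, Real.cos_pi_div_three,
    Real.sin_pi_div_three]
  norm_num

lemma s4 : s 4 = (1/2, -rr) := by
  unfold s
  have h1 : (((4:Fin 6) : ℕ) + 1 : ℝ) * Real.pi / 3 = Real.pi + 2*(Real.pi/3) := by
    have hc : ((4:Fin 6):ℕ) = 4 := rfl
    rw [hc]; push_cast; ring
  rw [h1, Real.cos_add, Real.sin_add, Real.cos_pi, Real.sin_pi]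
  have c2 : Real.cos (2*(Real.pi/3)) = -(1/2) := by
    have h : 2*(Real.pi/3) = Real.pi - Real.pi/3 := by ring
    rw [h, Real.cos_pi_sub, Real.cos_pi_div_three]
  have s2' : Real.sin (2*(Real.pi/3)) = rr := by
    have h : 2*(Real.pi/3) = Real.pi - Real.pi/3 := by ring
    rw [h, Real.sin_pi_sub, Real.sin_pi_div_three]
  rw [c2, s2']; norm_num

lemma s5 : s 5 = (1, 0) := by
  unfold s
  have h1 : (((5:Fin 6) : ℕ) + 1 : ℝ) * Real.pi / 3 = 2*Real.pi := by
    have hc : ((5:Fin 6):ℕ) = 5 := rfl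
    rw [hc]; push_cast; ring
  rw [h1, Real.cos_two_pi, Real.sin_two_pi]

/-- The affine map `(x, y) ↦ a x + b y + c`. -/
def F (a b c : ℝ) : (ℝ × ℝ) →ᵃ[ℝ] ℝ :=
  { toFun := fun p => a * p.1 + b * p.2 + c
    linear := a • LinearMap.fst ℝ ℝ ℝ + b • LinearMap.snd ℝ ℝ ℝ
    map_vadd' := by
      intro p v
      simp [Prod.fst_add, Prod.snd_add]
      ring }

@[simp] lemma F_apply (a b c : ℝ) (p : ℝ × ℝ) : F a b c p = a * p.1 + b * p.2 + c := rfl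

lemma exists_repr (f : (ℝ × ℝ) →ᵃ[ℝ] ℝ) : ∃ a b c, f = F a b c := by
  refine ⟨f.linear (1, 0), f.linear (0, 1), f (0, 0), ?_⟩
  ext p
  have h : p = (p.1 • ((1:ℝ),(0:ℝ)) + p.2 • ((0:ℝ),(1:ℝ))) +ᵥ ((0:ℝ),(0:ℝ)) := by
    simp [Prod.ext_iff]
  rw [h, AffineMap.map_vadd, map_add, f.linear.map_smul, f.linear.map_smul]
  simp [smul_eq_mul]
  ring

lemma F_add (a b c a' b' c' : ℝ) : F a b c + F a' b' c' = F (a+a') (b+b') (c+c') := by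
  ext p; simp; ring

lemma F_smul (t a b c : ℝ) : t • F a b c = F (t*a) (t*b) (t*c) := by
  ext p; simp; ring

lemma F_congr {a b c a' b' c' : ℝ} (ha : a = a') (hb : b = b') (hc : c = c') :
    F a b c = F a' b' c' := by rw [ha, hb, hc]

@[simp] lemma ev0 (a b c : ℝ) : F a b c (s 0) = a/2 + b*rr + c := by rw [s0, F_apply]; ring
@[simp] lemma ev1 (a b c : ℝ) : F a b c (s 1) = -(a/2) + b*rr + c := by rw [s1, F_apply]; ring
@[simp] lemma ev2 (a b c : ℝ) : F a b c (s 2) = -a + c := by rw [s2, F_apply]; ring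
@[simp] lemma ev3 (a b c : ℝ) : F a b c (s 3) = -(a/2) - b*rr + c := by rw [s3, F_apply]; ring
@[simp] lemma ev4 (a b c : ℝ) : F a b c (s 4) = a/2 - b*rr + c := by rw [s4, F_apply]; ring
@[simp] lemma ev5 (a b c : ℝ) : F a b c (s 5) = a + c := by rw [s5, F_apply]; ring

lemma mem_OC_iff (f : (ℝ × ℝ) →ᵃ[ℝ] ℝ) :
    f ∈ OC ↔ ∀ j : Fin 6, f (s j) ∈ Set.Icc (0:ℝ) 1 := by
  constructor
  · intro hf j
    apply hf
    apply subset_convexHull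
    fin_cases j <;> simp
  · intro h x hx
    have hsub : C ⊆ f ⁻¹' (Set.Icc 0 1) := by
      apply convexHull_min ?_ ((convex_Icc (0:ℝ) 1).affine_preimage f)
      rintro y (rfl | rfl | rfl | rfl | rfl | rfl) <;> exact h _
    exact hsub hx

/-- Three determination lemmas. -/
lemma det013 (f g : (ℝ × ℝ) →ᵃ[ℝ] ℝ) (h0 : f (s 0) = g (s 0)) (h1 : f (s 1) = g (s 1))
    (h3 : f (s 3) = g (s 3)) : f = g := by
  obtain ⟨a, b, c, rfl⟩ := exists_repr f
  obtain ⟨a', b', c', rfl⟩ := exists_repr g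
  simp only [ev0, ev1, ev3] at h0 h1 h3
  have hb : b * rr = b' * rr := by linarith
  exact F_congr (by linarith) (mul_right_cancel₀ hrrne hb) (by linarith)

lemma det125 (f g : (ℝ × ℝ) →ᵃ[ℝ] ℝ) (h1 : f (s 1) = g (s 1)) (h2 : f (s 2) = g (s 2))
    (h5 : f (s 5) = g (s 5)) : f = g := by
  obtain ⟨a, b, c, rfl⟩ := exists_repr f
  obtain ⟨a', b', c', rfl⟩ := exists_repr g
  simp only [ev1, ev2, ev5] at h1 h2 h5
  have hb : b * rr = b' * rr := by linarith
  exact F_congr (by linarith) (mul_right_cancel₀ hrrne hb) (by linarith)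

lemma det025 (f g : (ℝ × ℝ) →ᵃ[ℝ] ℝ) (h0 : f (s 0) = g (s 0)) (h2 : f (s 2) = g (s 2))
    (h5 : f (s 5) = g (s 5)) : f = g := by
  obtain ⟨a, b, c, rfl⟩ := exists_repr f
  obtain ⟨a', b', c', rfl⟩ := exists_repr g
  simp only [ev0, ev2, ev5] at h0 h2 h5
  have hb : b * rr = b' * rr := by linarith
  exact F_congr (by linarith) (mul_right_cancel₀ hrrne hb) (by linarith)

lemma seg_eq {t u x y z : ℝ} (ht : 0 < t) (hu : 0 < u) (htu : t + u = 1)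
    (hx : x ∈ Set.Icc (0:ℝ) 1) (hy : y ∈ Set.Icc (0:ℝ) 1) (h : t*x + u*y = z)
    (hz : z = 0 ∨ z = 1) : x = z ∧ y = z := by
  obtain ⟨hx0, hx1⟩ := hx
  obtain ⟨hy0, hy1⟩ := hy
  rcases hz with rfl | rfl
  · constructor <;> nlinarith
  · constructor <;> nlinarith

/-- Generic extreme-point certificate: an element of `OC` taking value `0` or `1` at
three determining vertices is an extreme point. -/
lemma pinned_extreme (p : (ℝ × ℝ) →ᵃ[ℝ] ℝ) (hp : p ∈ OC) (j k l : Fin 6)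
    (hdet : ∀ f g : (ℝ × ℝ) →ᵃ[ℝ] ℝ,
      f (s j) = g (s j) → f (s k) = g (s k) → f (s l) = g (s l) → f = g)
    (hj : p (s j) = 0 ∨ p (s j) = 1) (hk : p (s k) = 0 ∨ p (s k) = 1)
    (hl : p (s l) = 0 ∨ p (s l) = 1) :
    p ∈ Set.extremePoints ℝ OC := by
  refine ⟨hp, ?_⟩
  intro x1 hx1 x2 hx2 hseg
  obtain ⟨ta, tb, hta, htb, htab, hsum⟩ := hseg
  have key : ∀ m : Fin 6, p (s m) = 0 ∨ p (s m) = 1 →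
      x1 (s m) = p (s m) ∧ x2 (s m) = p (s m) := by
    intro m hm
    have e : ta * x1 (s m) + tb * x2 (s m) = p (s m) := by
      have := congrArg (fun f : (ℝ × ℝ) →ᵃ[ℝ] ℝ => f (s m)) hsum
      simpa [AffineMap.coe_add, AffineMap.coe_smul, Pi.add_apply, Pi.smul_apply,
        smul_eq_mul] using this
    exact seg_eq hta htb htab ((mem_OC_iff x1).1 hx1 m) ((mem_OC_iff x2).1 hx2 m) e hm
  exact hdet x1 p (key j hj).1 (key k hk).1 (key l hl).1

lemma mem_hull4 {E : Type*} [AddCommGroup E] [Module ℝ E] {T : Set E} {p q u w : E}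
    (hp : p ∈ T) (hq : q ∈ T) (hu : u ∈ T) (hw : w ∈ T) {α β γ δ : ℝ}
    (hα : 0 ≤ α) (hβ : 0 ≤ β) (hγ : 0 ≤ γ) (hδ : 0 ≤ δ) (hsum : α + β + γ + δ = 1) :
    α • p + β • q + γ • u + δ • w ∈ convexHull ℝ T := by
  have hs : ∑ i : Fin 4, ![α, β, γ, δ] i = 1 := by
    simp [Fin.sum_univ_four, hsum]
  have := Finset.centerMass_mem_convexHull (R := ℝ) (s := T) Finset.univ
    (w := ![α, β, γ, δ]) (by intro i _; fin_cases i <;> assumption)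
    (by rw [hs]; norm_num) (z := ![p, q, u, w]) (by intro i _; fin_cases i <;> assumption)
  rwa [Finset.centerMass_eq_of_sum_1 _ _ hs, Fin.sum_univ_four] at this


lemma F_mem_OC_of {f : (ℝ × ℝ) →ᵃ[ℝ] ℝ}
    (h0 : f (s 0) ∈ Set.Icc (0:ℝ) 1) (h1 : f (s 1) ∈ Set.Icc (0:ℝ) 1)
    (h2 : f (s 2) ∈ Set.Icc (0:ℝ) 1) (h3 : f (s 3) ∈ Set.Icc (0:ℝ) 1)
    (h4 : f (s 4) ∈ Set.Icc (0:ℝ) 1) (h5 : f (s 5) ∈ Set.Icc (0:ℝ) 1) : f ∈ OC := by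
  rw [mem_OC_iff]
  intro j
  fin_cases j <;> assumption

lemma convex_OC : Convex ℝ OC := by
  intro f hf g hg ta tb hta htb htab
  rw [mem_OC_iff]
  intro j
  have h1 := (mem_OC_iff f).1 hf j
  have h2 := (mem_OC_iff g).1 hg j
  have e : (ta • f + tb • g) (s j) = ta * f (s j) + tb * g (s j) := by
    simp [AffineMap.coe_add, AffineMap.coe_smul, Pi.add_apply, Pi.smul_apply, smul_eq_mul]
  rw [e]
  constructor
  · nlinarith [h1.1, h1.2, h2.1, h2.2]
  · nlinarith [h1.1, h1.2, h2.1, h2.2]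

lemma div_rr_mul (k : ℝ) : k / rr * rr = k := div_mul_cancel₀ _ hrrne

end HexAux

open HexAux

set_option maxHeartbeats 2000000 in
/-- The extreme points of the convex-form space of the hexagon are exactly the zero
form, the unit form, and the six forms `v i`. -/
theorem extremePoints_OC :
    ∀ v : Fin 6 → ((ℝ × ℝ) →ᵃ[ℝ] ℝ), IsHexForms v →
      Set.extremePoints ℝ OC =
        {AffineMap.const ℝ (ℝ × ℝ) (0 : ℝ), AffineMap.const ℝ (ℝ × ℝ) (1 : ℝ),
         v 0, v 1, v 2, v 3, v 4, v 5} := by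
  intro v hv
  have hP0 : AffineMap.const ℝ (ℝ × ℝ) (0 : ℝ) = F 0 0 0 := by ext p; simp
  have hP1 : AffineMap.const ℝ (ℝ × ℝ) (1 : ℝ) = F 0 0 1 := by ext p; simp
  have hv0F : v 0 = F 0 ((1/2)/(Real.sqrt 3 / 2)) (1/2) := by
    obtain ⟨E1, E2, E3, E4, E5, E6⟩ := hv 0
    rw [show (0:Fin 6) + 1 = 1 from by decide] at E2
    rw [show (0:Fin 6) - 1 = 5 from by decide] at E3
    rw [show (0:Fin 6) + 2 = 2 from by decide] at E4
    rw [show (0:Fin 6) + 3 = 3 from by decide] at E5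
    rw [show (0:Fin 6) + 4 = 4 from by decide] at E6
    obtain ⟨a, b, c, hr⟩ := exists_repr (v 0)
    rw [hr] at E1 E2 E3 E4 E5 E6 ⊢
    simp only [ev0, ev1, ev2, ev3, ev4, ev5] at E1 E2 E3 E4 E5 E6
    exact F_congr (by linarith) ((eq_div_iff hrrne).mpr (by linarith)) (by linarith)
  have hv1F : v 1 = F (-(1/2)) ((1/4)/(Real.sqrt 3 / 2)) (1/2) := by
    obtain ⟨E1, E2, E3, E4, E5, E6⟩ := hv 1
    rw [show (1:Fin 6) + 1 = 2 from by decide] at E2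
    rw [show (1:Fin 6) - 1 = 0 from by decide] at E3
    rw [show (1:Fin 6) + 2 = 3 from by decide] at E4
    rw [show (1:Fin 6) + 3 = 4 from by decide] at E5
    rw [show (1:Fin 6) + 4 = 5 from by decide] at E6
    obtain ⟨a, b, c, hr⟩ := exists_repr (v 1)
    rw [hr] at E1 E2 E3 E4 E5 E6 ⊢
    simp only [ev0, ev1, ev2, ev3, ev4, ev5] at E1 E2 E3 E4 E5 E6
    exact F_congr (by linarith) ((eq_div_iff hrrne).mpr (by linarith)) (by linarith)
  have hv2F : v 2 = F (-(1/2)) ((-(1/4))/(Real.sqrt 3 / 2)) (1/2) := by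
    obtain ⟨E1, E2, E3, E4, E5, E6⟩ := hv 2
    rw [show (2:Fin 6) + 1 = 3 from by decide] at E2
    rw [show (2:Fin 6) - 1 = 1 from by decide] at E3
    rw [show (2:Fin 6) + 2 = 4 from by decide] at E4
    rw [show (2:Fin 6) + 3 = 5 from by decide] at E5
    rw [show (2:Fin 6) + 4 = 0 from by decide] at E6
    obtain ⟨a, b, c, hr⟩ := exists_repr (v 2)
    rw [hr] at E1 E2 E3 E4 E5 E6 ⊢
    simp only [ev0, ev1, ev2, ev3, ev4, ev5] at E1 E2 E3 E4 E5 E6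
    exact F_congr (by linarith) ((eq_div_iff hrrne).mpr (by linarith)) (by linarith)
  have hv3F : v 3 = F 0 ((-(1/2))/(Real.sqrt 3 / 2)) (1/2) := by
    obtain ⟨E1, E2, E3, E4, E5, E6⟩ := hv 3
    rw [show (3:Fin 6) + 1 = 4 from by decide] at E2
    rw [show (3:Fin 6) - 1 = 2 from by decide] at E3
    rw [show (3:Fin 6) + 2 = 5 from by decide] at E4
    rw [show (3:Fin 6) + 3 = 0 from by decide] at E5
    rw [show (3:Fin 6) + 4 = 1 from by decide] at E6
    obtain ⟨a, b, c, hr⟩ := exists_repr (v 3)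
    rw [hr] at E1 E2 E3 E4 E5 E6 ⊢
    simp only [ev0, ev1, ev2, ev3, ev4, ev5] at E1 E2 E3 E4 E5 E6
    exact F_congr (by linarith) ((eq_div_iff hrrne).mpr (by linarith)) (by linarith)
  have hv4F : v 4 = F (1/2) ((-(1/4))/(Real.sqrt 3 / 2)) (1/2) := by
    obtain ⟨E1, E2, E3, E4, E5, E6⟩ := hv 4
    rw [show (4:Fin 6) + 1 = 5 from by decide] at E2
    rw [show (4:Fin 6) - 1 = 3 from by decide] at E3
    rw [show (4:Fin 6) + 2 = 0 from by decide] at E4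
    rw [show (4:Fin 6) + 3 = 1 from by decide] at E5
    rw [show (4:Fin 6) + 4 = 2 from by decide] at E6
    obtain ⟨a, b, c, hr⟩ := exists_repr (v 4)
    rw [hr] at E1 E2 E3 E4 E5 E6 ⊢
    simp only [ev0, ev1, ev2, ev3, ev4, ev5] at E1 E2 E3 E4 E5 E6
    exact F_congr (by linarith) ((eq_div_iff hrrne).mpr (by linarith)) (by linarith)
  have hv5F : v 5 = F (1/2) ((1/4)/(Real.sqrt 3 / 2)) (1/2) := by
    obtain ⟨E1, E2, E3, E4, E5, E6⟩ := hv 5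
    rw [show (5:Fin 6) + 1 = 0 from by decide] at E2
    rw [show (5:Fin 6) - 1 = 4 from by decide] at E3
    rw [show (5:Fin 6) + 2 = 1 from by decide] at E4
    rw [show (5:Fin 6) + 3 = 2 from by decide] at E5
    rw [show (5:Fin 6) + 4 = 3 from by decide] at E6
    obtain ⟨a, b, c, hr⟩ := exists_repr (v 5)
    rw [hr] at E1 E2 E3 E4 E5 E6 ⊢
    simp only [ev0, ev1, ev2, ev3, ev4, ev5] at E1 E2 E3 E4 E5 E6
    exact F_congr (by linarith) ((eq_div_iff hrrne).mpr (by linarith)) (by linarith)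
  have hOC0 : F (0:ℝ) 0 0 ∈ OC := by
    refine F_mem_OC_of ?_ ?_ ?_ ?_ ?_ ?_ <;>
      simp only [ev0, ev1, ev2, ev3, ev4, ev5] <;> norm_num
  have hOC1 : F (0:ℝ) 0 1 ∈ OC := by
    refine F_mem_OC_of ?_ ?_ ?_ ?_ ?_ ?_ <;>
      simp only [ev0, ev1, ev2, ev3, ev4, ev5] <;> norm_num
  have hOCv0 : v 0 ∈ OC := by
    rw [hv0F]
    refine F_mem_OC_of ?_ ?_ ?_ ?_ ?_ ?_ <;>
      simp only [ev0, ev1, ev2, ev3, ev4, ev5, div_rr_mul] <;> norm_num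
  have hOCv1 : v 1 ∈ OC := by
    rw [hv1F]
    refine F_mem_OC_of ?_ ?_ ?_ ?_ ?_ ?_ <;>
      simp only [ev0, ev1, ev2, ev3, ev4, ev5, div_rr_mul] <;> norm_num
  have hOCv2 : v 2 ∈ OC := by
    rw [hv2F]
    refine F_mem_OC_of ?_ ?_ ?_ ?_ ?_ ?_ <;>
      simp only [ev0, ev1, ev2, ev3, ev4, ev5, div_rr_mul] <;> norm_num
  have hOCv3 : v 3 ∈ OC := by
    rw [hv3F]
    refine F_mem_OC_of ?_ ?_ ?_ ?_ ?_ ?_ <;>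
      simp only [ev0, ev1, ev2, ev3, ev4, ev5, div_rr_mul] <;> norm_num
  have hOCv4 : v 4 ∈ OC := by
    rw [hv4F]
    refine F_mem_OC_of ?_ ?_ ?_ ?_ ?_ ?_ <;>
      simp only [ev0, ev1, ev2, ev3, ev4, ev5, div_rr_mul] <;> norm_num
  have hOCv5 : v 5 ∈ OC := by
    rw [hv5F]
    refine F_mem_OC_of ?_ ?_ ?_ ?_ ?_ ?_ <;>
      simp only [ev0, ev1, ev2, ev3, ev4, ev5, div_rr_mul] <;> norm_num
  have hTsub : ({AffineMap.const ℝ (ℝ × ℝ) (0 : ℝ), AffineMap.const ℝ (ℝ × ℝ) (1 : ℝ),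
      v 0, v 1, v 2, v 3, v 4, v 5} : Set ((ℝ × ℝ) →ᵃ[ℝ] ℝ)) ⊆ OC := by
    intro f hf
    simp only [Set.mem_insert_iff, Set.mem_singleton_iff] at hf
    rcases hf with rfl|rfl|rfl|rfl|rfl|rfl|rfl|rfl
    · rw [hP0]; exact hOC0
    · rw [hP1]; exact hOC1
    · exact hOCv0
    · exact hOCv1
    · exact hOCv2
    · exact hOCv3
    · exact hOCv4
    · exact hOCv5
  have hOCsub : OC ⊆ convexHull ℝ ({AffineMap.const ℝ (ℝ × ℝ) (0 : ℝ),
      AffineMap.const ℝ (ℝ × ℝ) (1 : ℝ), v 0, v 1, v 2, v 3, v 4, v 5} :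
        Set ((ℝ × ℝ) →ᵃ[ℝ] ℝ)) := by
    intro f hf
    obtain ⟨a, b, c, rfl⟩ := exists_repr f
    have h := (mem_OC_iff _).1 hf
    have h0 := h 0; have h1 := h 1; have h2 := h 2
    have h3 := h 3; have h4 := h 4; have h5 := h 5
    rw [ev0] at h0; rw [ev1] at h1; rw [ev2] at h2
    rw [ev3] at h3; rw [ev4] at h4; rw [ev5] at h5
    obtain ⟨h0l, h0r⟩ := h0; obtain ⟨h1l, h1r⟩ := h1; obtain ⟨h2l, h2r⟩ := h2
    obtain ⟨h3l, h3r⟩ := h3; obtain ⟨h4l, h4r⟩ := h4; obtain ⟨h5l, h5r⟩ := h5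
    rcases le_total 0 a with ha | ha
    · rcases le_total (a/2) (b*(Real.sqrt 3/2)) with hs1 | hs1
      · -- S1
        have hcomb : F a b c = (1 - c - a/2 - b*(Real.sqrt 3/2)) • F 0 0 0 + (c - a/2 - b*(Real.sqrt 3/2)) • F 0 0 1 +
            (2*a) • F (1/2) ((1/4)/(Real.sqrt 3 / 2)) (1/2) +
            (2*(b*(Real.sqrt 3/2)) - a) • F 0 ((1/2)/(Real.sqrt 3 / 2)) (1/2) := by
          simp only [F_smul, F_add]
          refine F_congr (by ring) ?_ (by ring)
          field_simp
          ring
        rw [hcomb, ← hv5F, ← hv0F, ← hP0, ← hP1]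
        refine mem_hull4 (by simp) (by simp) (by simp) (by simp) (by linarith) (by linarith)
          (by linarith) (by linarith) (by ring)
      · rcases le_total (-(a/2)) (b*(Real.sqrt 3/2)) with hs2 | hs2
        · -- S2
          have hcomb : F a b c = (1 - c - a) • F 0 0 0 + (c - a) • F 0 0 1 +
              (a - 2*(b*(Real.sqrt 3/2))) • F (1/2) ((-(1/4))/(Real.sqrt 3 / 2)) (1/2) +
              (a + 2*(b*(Real.sqrt 3/2))) • F (1/2) ((1/4)/(Real.sqrt 3 / 2)) (1/2) := by
            simp only [F_smul, F_add]
            refine F_congr (by ring) ?_ (by ring)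
            field_simp
            ring
          rw [hcomb, ← hv4F, ← hv5F, ← hP0, ← hP1]
          refine mem_hull4 (by simp) (by simp) (by simp) (by simp) (by linarith) (by linarith)
            (by linarith) (by linarith) (by ring)
        · -- S3
          have hcomb : F a b c = (1 - c - a/2 + b*(Real.sqrt 3/2)) • F 0 0 0 + (c - a/2 + b*(Real.sqrt 3/2)) • F 0 0 1 +
              (-(2*(b*(Real.sqrt 3/2))) - a) • F 0 ((-(1/2))/(Real.sqrt 3 / 2)) (1/2) +
              (2*a) • F (1/2) ((-(1/4))/(Real.sqrt 3 / 2)) (1/2) := by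
            simp only [F_smul, F_add]
            refine F_congr (by ring) ?_ (by ring)
            field_simp
            ring
          rw [hcomb, ← hv3F, ← hv4F, ← hP0, ← hP1]
          refine mem_hull4 (by simp) (by simp) (by simp) (by simp) (by linarith) (by linarith)
            (by linarith) (by linarith) (by ring)
    · rcases le_total (-(a/2)) (b*(Real.sqrt 3/2)) with hs1 | hs1
      · -- S4
        have hcomb : F a b c = (1 - c + a/2 - b*(Real.sqrt 3/2)) • F 0 0 0 + (c + a/2 - b*(Real.sqrt 3/2)) • F 0 0 1 +
            (2*(b*(Real.sqrt 3/2)) + a) • F 0 ((1/2)/(Real.sqrt 3 / 2)) (1/2) +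
            (-(2*a)) • F (-(1/2)) ((1/4)/(Real.sqrt 3 / 2)) (1/2) := by
          simp only [F_smul, F_add]
          refine F_congr (by ring) ?_ (by ring)
          field_simp
          ring
        rw [hcomb, ← hv0F, ← hv1F, ← hP0, ← hP1]
        refine mem_hull4 (by simp) (by simp) (by simp) (by simp) (by linarith) (by linarith)
          (by linarith) (by linarith) (by ring)
      · rcases le_total (a/2) (b*(Real.sqrt 3/2)) with hs2 | hs2
        · -- S5
          have hcomb : F a b c = (1 - c + a) • F 0 0 0 + (c + a) • F 0 0 1 +
              (2*(b*(Real.sqrt 3/2)) - a) • F (-(1/2)) ((1/4)/(Real.sqrt 3 / 2)) (1/2) +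
              (-(2*(b*(Real.sqrt 3/2))) - a) • F (-(1/2)) ((-(1/4))/(Real.sqrt 3 / 2)) (1/2) := by
            simp only [F_smul, F_add]
            refine F_congr (by ring) ?_ (by ring)
            field_simp
            ring
          rw [hcomb, ← hv1F, ← hv2F, ← hP0, ← hP1]
          refine mem_hull4 (by simp) (by simp) (by simp) (by simp) (by linarith) (by linarith)
            (by linarith) (by linarith) (by ring)
        · -- S6
          have hcomb : F a b c = (1 - c + a/2 + b*(Real.sqrt 3/2)) • F 0 0 0 + (c + a/2 + b*(Real.sqrt 3/2)) • F 0 0 1 +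
              (-(2*a)) • F (-(1/2)) ((-(1/4))/(Real.sqrt 3 / 2)) (1/2) +
              (a - 2*(b*(Real.sqrt 3/2))) • F 0 ((-(1/2))/(Real.sqrt 3 / 2)) (1/2) := by
            simp only [F_smul, F_add]
            refine F_congr (by ring) ?_ (by ring)
            field_simp
            ring
          rw [hcomb, ← hv2F, ← hv3F, ← hP0, ← hP1]
          refine mem_hull4 (by simp) (by simp) (by simp) (by simp) (by linarith) (by linarith)
            (by linarith) (by linarith) (by ring)
  apply Set.Subset.antisymm
  · have hull : OC = convexHull ℝ ({AffineMap.const ℝ (ℝ × ℝ) (0 : ℝ),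
        AffineMap.const ℝ (ℝ × ℝ) (1 : ℝ), v 0, v 1, v 2, v 3, v 4, v 5} :
          Set ((ℝ × ℝ) →ᵃ[ℝ] ℝ)) :=
      Set.Subset.antisymm hOCsub (convexHull_min hTsub convex_OC)
    rw [hull]
    exact extremePoints_convexHull_subset
  · intro f hf
    simp only [Set.mem_insert_iff, Set.mem_singleton_iff] at hf
    have hval : ∀ (a b c : ℝ) (k : ℝ), k/(Real.sqrt 3/2)*(Real.sqrt 3/2) = k := by
      intro _ _ _ k; exact div_rr_mul k
    rcases hf with rfl|rfl|rfl|rfl|rfl|rfl|rfl|rfl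
    · rw [hP0]
      refine pinned_extreme _ (hOC0) 0 1 3 det013 ?_ ?_ ?_
      · exact Or.inl (by simp only [ev0, div_rr_mul]; norm_num)
      · exact Or.inl (by simp only [ev1, div_rr_mul]; norm_num)
      · exact Or.inl (by simp only [ev3, div_rr_mul]; norm_num)
    · rw [hP1]
      refine pinned_extreme _ (hOC1) 0 1 3 det013 ?_ ?_ ?_
      · exact Or.inr (by simp only [ev0, div_rr_mul]; norm_num)
      · exact Or.inr (by simp only [ev1, div_rr_mul]; norm_num)
      · exact Or.inr (by simp only [ev3, div_rr_mul]; norm_num)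
    · rw [hv0F]
      refine pinned_extreme _ (hv0F ▸ hOCv0) 0 1 3 det013 ?_ ?_ ?_
      · exact Or.inr (by simp only [ev0, div_rr_mul]; norm_num)
      · exact Or.inr (by simp only [ev1, div_rr_mul]; norm_num)
      · exact Or.inl (by simp only [ev3, div_rr_mul]; norm_num)
    · rw [hv1F]
      refine pinned_extreme _ (hv1F ▸ hOCv1) 1 2 5 det125 ?_ ?_ ?_
      · exact Or.inr (by simp only [ev1, div_rr_mul]; norm_num)
      · exact Or.inr (by simp only [ev2, div_rr_mul]; norm_num)
      · exact Or.inl (by simp only [ev5, div_rr_mul]; norm_num)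
    · rw [hv2F]
      refine pinned_extreme _ (hv2F ▸ hOCv2) 0 2 5 det025 ?_ ?_ ?_
      · exact Or.inl (by simp only [ev0, div_rr_mul]; norm_num)
      · exact Or.inr (by simp only [ev2, div_rr_mul]; norm_num)
      · exact Or.inl (by simp only [ev5, div_rr_mul]; norm_num)
    · rw [hv3F]
      refine pinned_extreme _ (hv3F ▸ hOCv3) 0 1 3 det013 ?_ ?_ ?_
      · exact Or.inl (by simp only [ev0, div_rr_mul]; norm_num)
      · exact Or.inl (by simp only [ev1, div_rr_mul]; norm_num)
      · exact Or.inr (by simp only [ev3, div_rr_mul]; norm_num)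
    · rw [hv4F]
      refine pinned_extreme _ (hv4F ▸ hOCv4) 1 2 5 det125 ?_ ?_ ?_
      · exact Or.inl (by simp only [ev1, div_rr_mul]; norm_num)
      · exact Or.inl (by simp only [ev2, div_rr_mul]; norm_num)
      · exact Or.inr (by simp only [ev5, div_rr_mul]; norm_num)
    · rw [hv5F]
      refine pinned_extreme _ (hv5F ▸ hOCv5) 0 2 5 det025 ?_ ?_ ?_
      · exact Or.inr (by simp only [ev0, div_rr_mul]; norm_num)
      · exact Or.inl (by simp only [ev2, div_rr_mul]; norm_num)
      · exact Or.inr (by simp only [ev5, div_rr_mul]; norm_num)
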